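/- Define L(n) = ∫_{-1/2}^{3/2} (3x² - 2x³)ⁿ dx for nonnegative integers n. Then for every nonnegative integer n, 9(n+1)(2n+1)·L(n) - 2(3n+4)(3n+2)·L(n+1) = 2. -/

import Mathlib

theorem ruehr_L_recurrence (L : ℕ → ℝ)
    (hL : ∀ n : ℕ, L n = ∫ x in (-1/2 : ℝ)..(3/2 : ℝ), (3 * x ^ 2 - 2 * x ^ 3) ^ n) :
    ∀ n : ℕ, 9 * ((n : ℝ) + 1) * (2 * (n : ℝ) + 1) * L n
      - 2 * (3 * (n : ℝ) + 4) * (3 * (n : ℝ) + 2) * L (n + 1) = 2 := by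
  intro n
  set N : ℝ := (n : ℝ) with hN
  set A : ℝ := 9 * (N + 1) * (2 * N + 1) with hA
  set B : ℝ := 2 * (3 * N + 4) * (3 * N + 2) with hB
  -- f and the certificate p
  set f : ℝ → ℝ := fun x => 3 * x ^ 2 - 2 * x ^ 3 with hf
  set p : ℝ → ℝ := fun x =>
    9 * (N + 1) * x + 3 * N * x ^ 2 - 8 * (3 * N + 2) * x ^ 3 + 4 * (3 * N + 2) * x ^ 4 with hp
  have hcont : ∀ m : ℕ, Continuous (fun x : ℝ => f x ^ m) := by
    intro m
    exact ((continuous_const.mul (continuous_pow 2)).sub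
      (continuous_const.mul (continuous_pow 3))).pow m
  have hint : ∀ m : ℕ, IntervalIntegrable (fun x : ℝ => f x ^ m)
      MeasureTheory.volume (-1/2 : ℝ) (3/2 : ℝ) := fun m => (hcont m).intervalIntegrable _ _
  -- derivative of the antiderivative F x = p x * f x ^ n
  have hderiv : ∀ x : ℝ, HasDerivAt (fun x => p x * f x ^ n)
      (A * f x ^ n - B * f x ^ (n + 1)) x := by
    intro x
    have hfd : HasDerivAt f (6 * x - 6 * x ^ 2) x := by
      have h1 : HasDerivAt (fun x : ℝ => 3 * x ^ 2) (3 * (2 * x ^ 1)) x :=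
        (hasDerivAt_pow 2 x).const_mul 3
      have h2 : HasDerivAt (fun x : ℝ => 2 * x ^ 3) (2 * (3 * x ^ 2)) x :=
        (hasDerivAt_pow 3 x).const_mul 2
      have := h1.sub h2
      exact this.congr_deriv (by ring)
    have hpd : HasDerivAt p
        (9 * (N + 1) + 3 * N * (2 * x ^ 1) - 8 * (3 * N + 2) * (3 * x ^ 2)
          + 4 * (3 * N + 2) * (4 * x ^ 3)) x := by
      have h1 : HasDerivAt (fun x : ℝ => 9 * (N + 1) * x) (9 * (N + 1)) x := by
        simpa using (hasDerivAt_id x).const_mul (9 * (N + 1))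
      have h2 : HasDerivAt (fun x : ℝ => 3 * N * x ^ 2) (3 * N * (2 * x ^ 1)) x :=
        (hasDerivAt_pow 2 x).const_mul (3 * N)
      have h3 : HasDerivAt (fun x : ℝ => 8 * (3 * N + 2) * x ^ 3)
          (8 * (3 * N + 2) * (3 * x ^ 2)) x := (hasDerivAt_pow 3 x).const_mul (8 * (3 * N + 2))
      have h4 : HasDerivAt (fun x : ℝ => 4 * (3 * N + 2) * x ^ 4)
          (4 * (3 * N + 2) * (4 * x ^ 3)) x := (hasDerivAt_pow 4 x).const_mul (4 * (3 * N + 2))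
      exact ((h1.add h2).sub h3).add h4
    have hfn : HasDerivAt (fun x => f x ^ n)
        ((n : ℝ) * f x ^ (n - 1) * (6 * x - 6 * x ^ 2)) x := hfd.pow n
    have := hpd.mul hfn
    refine this.congr_deriv ?_
    symm
    cases n with
    | zero => simp [hA, hB, hN, hp]; ring
    | succ m =>
      simp only [Nat.succ_sub_one]
      have hfx : f x = 3 * x ^ 2 - 2 * x ^ 3 := rfl
      have hpx : p x = 9 * (N + 1) * x + 3 * N * x ^ 2 - 8 * (3 * N + 2) * x ^ 3
          + 4 * (3 * N + 2) * x ^ 4 := rfl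
      rw [pow_succ, pow_succ, pow_succ, hfx, hpx, hA, hB, hN]
      push_cast
      ring
  -- FTC
  have hFTC : (∫ x in (-1/2 : ℝ)..(3/2 : ℝ), (A * f x ^ n - B * f x ^ (n + 1)))
      = p (3/2) * f (3/2) ^ n - p (-1/2) * f (-1/2) ^ n := by
    exact intervalIntegral.integral_eq_sub_of_hasDerivAt (fun x _ => hderiv x)
      (((hint n).const_mul A).sub ((hint (n + 1)).const_mul B))
  have hsplit : (∫ x in (-1/2 : ℝ)..(3/2 : ℝ), (A * f x ^ n - B * f x ^ (n + 1)))
      = A * L n - B * L (n + 1) := by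
    rw [intervalIntegral.integral_sub ((hint n).const_mul A) ((hint (n+1)).const_mul B),
      intervalIntegral.integral_const_mul, intervalIntegral.integral_const_mul,
      hL n, hL (n + 1)]
  have hf32 : f (3/2 : ℝ) = 0 := by norm_num [hf]
  have hfm : f (-1/2 : ℝ) = 1 := by norm_num [hf]
  have hp32 : p (3/2 : ℝ) = 0 := by simp only [hp]; ring
  have hpm : p (-1/2 : ℝ) = -2 := by simp only [hp]; ring
  have key : A * L n - B * L (n + 1) = 2 := by
    rw [← hsplit, hFTC, hp32, hfm, hpm]
    simp
  calc 9 * (N + 1) * (2 * N + 1) * L n - 2 * (3 * N + 4) * (3 * N + 2) * L (n + 1)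
      = A * L n - B * L (n + 1) := by rw [hA, hB]
    _ = 2 := key
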